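/- Let A : S_n(ℝ) → ℝ^m be linear, b ∈ ℝ^m, and E_{SDP,p} = { X ∈ S_n(ℝ) : A(X) = b, X ⪰ 0, rank(X) ≤ p }. Assume p(p+1)/2 > m. Then for every M ∈ E_{SDP,p} with rank(M) = p, there exist a nonzero H ∈ S_n(ℝ) with A(H) = 0 and Range(H) ⊆ Range(M), and an ε > 0, such that for every t ∈ [−ε, ε]: M + tH ⪰ 0, A(M + tH) = b, rank(M + tH) = p, and Range(M + tH) = Range(M). In particular, M lies in the interior of a segment contained in E_{SDP,p} along which the column space (hence the tangent space to E_{SDP,p}) is constant. -/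

import Mathlib

open Matrix

section Aux

/-- Linear map sending a function on unordered pairs to the corresponding symmetric matrix. -/
noncomputable def toSymMat (p : ℕ) : (Sym2 (Fin p) → ℝ) →ₗ[ℝ] Matrix (Fin p) (Fin p) ℝ where
  toFun x := Matrix.of fun i j => x s(i, j)
  map_add' _ _ := rfl
  map_smul' _ _ := rfl

lemma exists_ker_aux (p m : ℕ) (hpm : m < p * (p + 1) / 2)
    (F : Matrix (Fin p) (Fin p) ℝ →ₗ[ℝ] (Fin m → ℝ)) :
    ∃ S : Matrix (Fin p) (Fin p) ℝ, S ≠ 0 ∧ Sᵀ = S ∧ F S = 0 := by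
  have hcard : Module.finrank ℝ (Sym2 (Fin p) → ℝ) = p * (p + 1) / 2 := by
    rw [Module.finrank_pi, Sym2.card]
    simp [Nat.choose_two_right, Nat.mul_comm]
  have hker : LinearMap.ker (F ∘ₗ toSymMat p) ≠ ⊥ := by
    intro h
    have hinj := LinearMap.ker_eq_bot.mp h
    have := LinearMap.finrank_le_finrank_of_injective hinj
    rw [hcard, Module.finrank_pi] at this
    simp at this
    omega
  obtain ⟨x, hx, hx0⟩ := Submodule.exists_mem_ne_zero_of_ne_bot hker
  refine ⟨toSymMat p x, ?_, ?_, ?_⟩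
  · intro h
    apply hx0
    funext q
    induction q using Sym2.ind with
    | _ i j =>
      have h2 := congrFun (congrFun h i) j
      exact h2
  · ext i j
    show x s(j, i) = x s(i, j)
    exact congrArg x Sym2.eq_swap
  · exact LinearMap.mem_ker.mp hx

lemma range_conj_aux {n p : ℕ} (U : Matrix (Fin n) (Fin p) ℝ) (hU : Uᵀ * U = 1)
    (K : Matrix (Fin p) (Fin p) ℝ) (hK : IsUnit K.det) :
    LinearMap.range (U * K * Uᵀ).mulVecLin = LinearMap.range U.mulVecLin := by
  apply le_antisymm
  · have : (U * K * Uᵀ).mulVecLin = U.mulVecLin ∘ₗ (K * Uᵀ).mulVecLin := by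
      rw [← Matrix.mulVecLin_mul, Matrix.mul_assoc]
    rw [this]
    exact LinearMap.range_comp_le_range _ _
  · rintro _ ⟨z, rfl⟩
    refine ⟨U *ᵥ (K⁻¹ *ᵥ z), ?_⟩
    simp only [Matrix.mulVecLin_apply, Matrix.mulVec_mulVec]
    have : U * K * Uᵀ * U * K⁻¹ = U := by
      rw [Matrix.mul_assoc (U * K), hU, Matrix.mul_one, Matrix.mul_assoc,
        Matrix.mul_nonsing_inv _ hK, Matrix.mul_one]
    rw [← Matrix.mul_assoc, this]

lemma posdef_perturb_aux {p : ℕ} (hp : 0 < p) (d : Fin p → ℝ) (hd : ∀ k, 0 < d k)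
    (S : Matrix (Fin p) (Fin p) ℝ) (hS : Sᵀ = S) :
    ∃ ε : ℝ, 0 < ε ∧ ∀ t : ℝ, |t| ≤ ε → (Matrix.diagonal d + t • S).PosDef := by
  haveI : Nonempty (Fin p) := ⟨⟨0, hp⟩⟩
  set dmin : ℝ := Finset.univ.inf' Finset.univ_nonempty d with hdmin
  have hdminpos : 0 < dmin := by
    obtain ⟨k, -, hk⟩ := Finset.exists_mem_eq_inf' Finset.univ_nonempty d
    rw [hdmin, hk]; exact hd k
  set C : ℝ := ∑ i, ∑ j, |S i j| with hC
  have hC0 : 0 ≤ C := Finset.sum_nonneg fun i _ => Finset.sum_nonneg fun j _ => abs_nonneg _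
  refine ⟨dmin / (2 * (C + 1)), by positivity, fun t ht => ?_⟩
  have hεC : |t| * C ≤ dmin / 2 := by
    have h1 : |t| * C ≤ dmin / (2 * (C + 1)) * C :=
      mul_le_mul_of_nonneg_right ht hC0
    have h2 : dmin / (2 * (C + 1)) * C ≤ dmin / 2 := by
      rw [div_mul_eq_mul_div, div_le_div_iff₀ (by positivity) (by norm_num)]
      nlinarith
    linarith
  rw [Matrix.posDef_iff_dotProduct_mulVec]
  constructor
  · rw [Matrix.IsHermitian, Matrix.conjTranspose_eq_transpose_of_trivial,
      Matrix.transpose_add, Matrix.transpose_smul, Matrix.diagonal_transpose, hS]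
  · intro x hx
    set Q : ℝ := ∑ i, x i ^ 2 with hQ
    have hQ0 : 0 < Q := by
      have : ∃ i, x i ≠ 0 := by
        by_contra h
        push_neg at h
        exact hx (funext h)
      obtain ⟨i, hi⟩ := this
      exact Finset.sum_pos' (fun j _ => sq_nonneg _) ⟨i, Finset.mem_univ i, by positivity⟩
    have hterm : ∀ i j : Fin p, |x i * x j| ≤ Q := by
      intro i j
      have hi : x i ^ 2 ≤ Q :=
        Finset.single_le_sum (fun k _ => sq_nonneg (x k)) (Finset.mem_univ i)
      have hj : x j ^ 2 ≤ Q :=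
        Finset.single_le_sum (fun k _ => sq_nonneg (x k)) (Finset.mem_univ j)
      rw [abs_le]
      constructor <;> nlinarith [sq_nonneg (x i + x j), sq_nonneg (x i - x j)]
    have hquad : |x ⬝ᵥ S *ᵥ x| ≤ C * Q := by
      calc |x ⬝ᵥ S *ᵥ x| = |∑ i, x i * ∑ j, S i j * x j| := by
            simp [dotProduct, Matrix.mulVec, dotProduct]
        _ ≤ ∑ i, |x i * ∑ j, S i j * x j| := Finset.abs_sum_le_sum_abs _ _
        _ ≤ ∑ i, ∑ j, |S i j| * Q := by
            apply Finset.sum_le_sum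
            intro i _
            calc |x i * ∑ j, S i j * x j| = |∑ j, x i * (S i j * x j)| := by
                  rw [Finset.mul_sum]
              _ ≤ ∑ j, |x i * (S i j * x j)| := Finset.abs_sum_le_sum_abs _ _
              _ ≤ ∑ j, |S i j| * Q := by
                  apply Finset.sum_le_sum
                  intro j _
                  have h5 : |x i * (S i j * x j)| = |S i j| * |x i * x j| := by
                    rw [show x i * (S i j * x j) = S i j * (x i * x j) by ring, abs_mul]
                  rw [h5]
                  exact mul_le_mul_of_nonneg_left (hterm i j) (abs_nonneg _)
        _ = C * Q := by rw [hC, Finset.sum_mul]; simp [Finset.sum_mul]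
    have hdiag : dmin * Q ≤ x ⬝ᵥ (Matrix.diagonal d) *ᵥ x := by
      have h6 : x ⬝ᵥ (Matrix.diagonal d) *ᵥ x = ∑ i, d i * x i ^ 2 := by
        simp [dotProduct, Matrix.mulVec_diagonal]
        apply Finset.sum_congr rfl
        intro i _
        ring
      rw [h6, hQ, Finset.mul_sum]
      apply Finset.sum_le_sum
      intro i _
      exact mul_le_mul_of_nonneg_right (Finset.inf'_le d (Finset.mem_univ i)) (sq_nonneg _)
    have hsplit : (star x) ⬝ᵥ (Matrix.diagonal d + t • S) *ᵥ x
        = x ⬝ᵥ (Matrix.diagonal d) *ᵥ x + t * (x ⬝ᵥ S *ᵥ x) := by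
      simp [Matrix.add_mulVec, Matrix.smul_mulVec, dotProduct_add, dotProduct_smul,
        smul_eq_mul, star_trivial]
    rw [hsplit]
    have h3 : -(|t| * |x ⬝ᵥ S *ᵥ x|) ≤ t * (x ⬝ᵥ S *ᵥ x) := by
      rw [← abs_mul]
      exact neg_abs_le _
    have h4 : |t| * |x ⬝ᵥ S *ᵥ x| ≤ (dmin / 2) * Q := by
      calc |t| * |x ⬝ᵥ S *ᵥ x| ≤ |t| * (C * Q) :=
            mul_le_mul_of_nonneg_left hquad (abs_nonneg _)
        _ = (|t| * C) * Q := by ring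
        _ ≤ (dmin / 2) * Q := mul_le_mul_of_nonneg_right hεC (le_of_lt hQ0)
    nlinarith

lemma exists_decomp_aux {n p : ℕ} (M : Matrix (Fin n) (Fin n) ℝ) (hM : M.PosSemidef)
    (hrank : M.rank = p) :
    ∃ (U : Matrix (Fin n) (Fin p) ℝ) (d : Fin p → ℝ),
      Uᵀ * U = 1 ∧ (∀ k, 0 < d k) ∧ M = U * Matrix.diagonal d * Uᵀ := by
  have hH := hM.isHermitian
  set V : Matrix (Fin n) (Fin n) ℝ := (hH.eigenvectorUnitary : Matrix (Fin n) (Fin n) ℝ) with hV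
  have hVunit : Vᵀ * V = 1 := by
    have := Matrix.mem_unitaryGroup_iff'.mp (hH.eigenvectorUnitary).2
    rwa [Matrix.star_eq_conjTranspose, Matrix.conjTranspose_eq_transpose_of_trivial] at this
  set lam : Fin n → ℝ := hH.eigenvalues with hlam
  have hspec : M = V * Matrix.diagonal lam * Vᵀ := by
    have := hH.spectral_theorem
    rwa [Unitary.conjStarAlgAut_apply, Matrix.star_eq_conjTranspose, Matrix.conjTranspose_eq_transpose_of_trivial,
      show (RCLike.ofReal ∘ hH.eigenvalues : Fin n → ℝ) = lam from rfl] at this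
  have hcard : Fintype.card {i // lam i ≠ 0} = p := by
    rw [← hH.rank_eq_card_non_zero_eigs, hrank]
  have e : Fin p ≃ {i // lam i ≠ 0} :=
    (Fintype.equivOfCardEq (by rw [hcard, Fintype.card_fin]) : Fin p ≃ {i // lam i ≠ 0})
  refine ⟨Matrix.of fun i k => V i ((e k) : Fin n), fun k => lam ((e k) : Fin n), ?_, ?_, ?_⟩
  · ext k l
    have h1 := congrFun (congrFun hVunit ((e k) : Fin n)) ((e l) : Fin n)
    simp only [Matrix.mul_apply, Matrix.transpose_apply, Matrix.one_apply,
      Matrix.of_apply] at h1 ⊢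
    rw [h1]
    by_cases h : k = l
    · simp [h]
    · have : ((e k) : Fin n) ≠ ((e l) : Fin n) := by
        intro hc
        exact h (e.injective (Subtype.ext hc))
      simp [h, this]
  · intro k
    exact lt_of_le_of_ne (hM.eigenvalues_nonneg _) (Ne.symm (e k).2)
  · rw [hspec]
    ext i j
    simp only [Matrix.mul_apply, Matrix.diagonal_apply, Matrix.transpose_apply, Matrix.of_apply,
      mul_ite, mul_zero, Finset.sum_ite_eq, Finset.sum_ite_eq', Finset.mem_univ, if_true]
    have hstep : ∀ f : Fin n → ℝ, (∀ a, lam a = 0 → f a = 0) →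
        ∑ a, f a = ∑ k : Fin p, f ((e k) : Fin n) := by
      intro f hf
      have h1 : ∑ a ∈ Finset.univ.filter (fun a => lam a ≠ 0), f a = ∑ a : Fin n, f a :=
        Finset.sum_filter_of_ne (fun a _ hfa hla => hfa (hf a hla))
      have h2 : ∑ a ∈ Finset.univ.filter (fun a => lam a ≠ 0), f a
          = ∑ a : {i // lam i ≠ 0}, f ↑a :=
        Finset.sum_subtype _ (fun a => by simp) f
      have h3 := Equiv.sum_comp e (fun a : {i // lam i ≠ 0} => f ↑a)
      rw [← h1, h2, ← h3]
    exact hstep (fun a => V i a * lam a * V j a)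
      (fun a ha => by show V i a * lam a * V j a = 0; rw [ha]; ring)

end Aux

/-- if `p(p+1)/2 > m`, every rank-`p` element `M` of
`E_{SDP,p} = {X : 𝒜 X = b, X ⪰ 0, rank X ≤ p}` lies in the interior of a
segment `[M - εH, M + εH] ⊆ E_{SDP,p}` along which the column space is
constant. -/
theorem segment_with_constant_range
    (n m p : ℕ)
    (𝒜 : Matrix (Fin n) (Fin n) ℝ →ₗ[ℝ] (Fin m → ℝ)) (b : Fin m → ℝ)
    (hpm : m < p * (p + 1) / 2)
    (M : Matrix (Fin n) (Fin n) ℝ) (hM : M.PosSemidef) (hMb : 𝒜 M = b)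
    (hrank : M.rank = p) :
    ∃ H : Matrix (Fin n) (Fin n) ℝ, H ≠ 0 ∧ H.IsSymm ∧ 𝒜 H = 0 ∧
      LinearMap.range H.mulVecLin ≤ LinearMap.range M.mulVecLin ∧
      ∃ ε : ℝ, 0 < ε ∧ ∀ t : ℝ, |t| ≤ ε →
        (M + t • H).PosSemidef ∧ 𝒜 (M + t • H) = b ∧ (M + t • H).rank = p ∧
        LinearMap.range (M + t • H).mulVecLin = LinearMap.range M.mulVecLin := by
  have hp : 0 < p := by
    rcases Nat.eq_zero_or_pos p with h | h
    · subst h; simp at hpm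
    · exact h
  obtain ⟨U, d, hU, hd, hdecomp⟩ := exists_decomp_aux M hM hrank
  -- the conjugation map `S ↦ U S Uᵀ`
  let conj : Matrix (Fin p) (Fin p) ℝ →ₗ[ℝ] Matrix (Fin n) (Fin n) ℝ :=
  { toFun := fun S => U * S * Uᵀ
    map_add' := fun A B => by simp only [Matrix.mul_add, Matrix.add_mul]
    map_smul' := fun c A => by
      simp only [RingHom.id_apply]
      rw [Matrix.mul_smul, Matrix.smul_mul] }
  obtain ⟨S, hS0, hSsym, hFS⟩ := exists_ker_aux p m hpm (𝒜 ∘ₗ conj)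
  have hAH : 𝒜 (U * S * Uᵀ) = 0 := hFS
  have hdetD : IsUnit (Matrix.diagonal d).det := by
    rw [Matrix.det_diagonal]
    exact isUnit_iff_ne_zero.mpr (Finset.prod_pos (fun k _ => hd k)).ne'
  have hRM : LinearMap.range M.mulVecLin = LinearMap.range U.mulVecLin := by
    rw [hdecomp]
    exact range_conj_aux U hU _ hdetD
  have hH0 : U * S * Uᵀ ≠ 0 := by
    intro h
    apply hS0
    have : Uᵀ * (U * S * Uᵀ) * U = S := by
      rw [show Uᵀ * (U * S * Uᵀ) * U = (Uᵀ * U) * S * (Uᵀ * U) by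
        simp only [Matrix.mul_assoc], hU, Matrix.one_mul, Matrix.mul_one]
    rw [← this, h, Matrix.mul_zero, Matrix.zero_mul]
  have hHsym : (U * S * Uᵀ).IsSymm := by
    show (U * S * Uᵀ)ᵀ = U * S * Uᵀ
    rw [Matrix.transpose_mul, Matrix.transpose_mul, Matrix.transpose_transpose, hSsym,
      Matrix.mul_assoc]
  have hRH : LinearMap.range (U * S * Uᵀ).mulVecLin ≤ LinearMap.range M.mulVecLin := by
    rw [hRM]
    have hcomp : (U * S * Uᵀ).mulVecLin = U.mulVecLin ∘ₗ (S * Uᵀ).mulVecLin := by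
      rw [← Matrix.mulVecLin_mul, ← Matrix.mul_assoc]
    rw [hcomp]
    exact LinearMap.range_comp_le_range _ _
  obtain ⟨ε, hε, hpd⟩ := posdef_perturb_aux hp d hd S hSsym
  refine ⟨U * S * Uᵀ, hH0, hHsym, hAH, hRH, ε, hε, fun t ht => ?_⟩
  have hKpd := hpd t ht
  have hMt : M + t • (U * S * Uᵀ) = U * (Matrix.diagonal d + t • S) * Uᵀ := by
    rw [hdecomp, Matrix.mul_add, Matrix.add_mul, Matrix.mul_smul, Matrix.smul_mul]
  have hdetK : IsUnit (Matrix.diagonal d + t • S).det :=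
    isUnit_iff_ne_zero.mpr hKpd.det_pos.ne'
  have hRt : LinearMap.range (M + t • (U * S * Uᵀ)).mulVecLin
      = LinearMap.range M.mulVecLin := by
    rw [hMt, range_conj_aux U hU _ hdetK, hRM]
  refine ⟨?_, ?_, ?_, hRt⟩
  · rw [hMt]
    have := (hKpd.posSemidef).mul_mul_conjTranspose_same U
    rwa [Matrix.conjTranspose_eq_transpose_of_trivial] at this
  · rw [map_add, LinearMap.map_smul, hMb, hAH, smul_zero, add_zero]
  · have : (M + t • (U * S * Uᵀ)).rank = M.rank := by
      unfold Matrix.rank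
      rw [hRt]
    rw [this, hrank]
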